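/- Let E be a real inner product space, let t > 0, and let ŷ : ℝ → E be continuously differentiable with ‖ŷ(s)‖ = 1 for all s ∈ [0, t]. If the length of the curve, ∫₀^t ‖ŷ'(s)‖ ds, is strictly less than π, then ŷ(t) ≠ -ŷ(0); that is, the endpoint of the curve on the unit sphere is not the antipode of its starting point. -/

import Mathlib

open Real Set
open scoped RealInnerProductSpace

/-- A continuously differentiable curve on the unit sphere of a real inner product space
whose length `∫₀^t ‖ŷ'(s)‖ ds` is less than `π` cannot end at the antipode of its
starting point. -/
theorem magnus_stmt5 {E : Type*} [NormedAddCommGroup E] [InnerProductSpace ℝ E]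
    (t : ℝ) (ht : 0 < t) (yhat : ℝ → E) (hC1 : ContDiff ℝ 1 yhat)
    (hunit : ∀ s ∈ Set.Icc (0:ℝ) t, ‖yhat s‖ = 1)
    (hlen : (∫ s in (0:ℝ)..t, ‖deriv yhat s‖) < Real.pi) :
    yhat t ≠ -yhat 0 := by
  intro hanti
  set L := ∫ s in (0:ℝ)..t, ‖deriv yhat s‖ with hL
  set u := yhat 0 with hu
  have hdy : Differentiable ℝ yhat := hC1.differentiable one_ne_zero
  have hderiv_cont : Continuous (deriv yhat) := hC1.continuous_deriv le_rfl
  have hu1 : ‖u‖ = 1 := hunit 0 ⟨le_rfl, ht.le⟩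
  set g : ℝ → ℝ := fun s => ⟪yhat s, u⟫ with hgdef
  have hgcont : Continuous g := (hdy.continuous.inner continuous_const)
  have hg' : ∀ s, HasDerivAt g ⟪deriv yhat s, u⟫ s := by
    intro s
    have := HasDerivAt.inner ℝ (hdy s).hasDerivAt (hasDerivAt_const s u)
    simpa using this
  -- orthogonality of the derivative
  have hortho : ∀ s ∈ Ioo (0:ℝ) t, ⟪deriv yhat s, yhat s⟫ = 0 := by
    intro s hs
    have h1 : HasDerivAt (fun x => ⟪yhat x, yhat x⟫)
        (⟪yhat s, deriv yhat s⟫ + ⟪deriv yhat s, yhat s⟫) s :=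
      HasDerivAt.inner ℝ (hdy s).hasDerivAt (hdy s).hasDerivAt
    have h2 : HasDerivAt (fun x => ⟪yhat x, yhat x⟫) 0 s := by
      have hev : (fun x => ⟪yhat x, yhat x⟫) =ᶠ[nhds s] fun _ => (1:ℝ) := by
        filter_upwards [Ioo_mem_nhds hs.1 hs.2] with x hx
        have hx1 : ‖yhat x‖ = 1 := hunit x ⟨hx.1.le, hx.2.le⟩
        rw [real_inner_self_eq_norm_sq, hx1]; norm_num
      exact (hasDerivAt_const s (1:ℝ)).congr_of_eventuallyEq hev
    have := h1.unique h2
    rw [real_inner_comm (deriv yhat s) (yhat s)] at this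
    linarith
  -- the key derivative bound
  have hkey : ∀ s ∈ Ioo (0:ℝ) t,
      |⟪deriv yhat s, u⟫| ≤ ‖deriv yhat s‖ * Real.sqrt (1 - g s ^ 2) := by
    intro s hs
    have hys : ‖yhat s‖ = 1 := hunit s ⟨hs.1.le, hs.2.le⟩
    set w := u - g s • yhat s with hw
    have h1 : ⟪deriv yhat s, u⟫ = ⟪deriv yhat s, w⟫ := by
      simp [hw, inner_sub_right, inner_smul_right, hortho s hs]
    have h2 : ‖w‖ ^ 2 = 1 - g s ^ 2 := by
      rw [← real_inner_self_eq_norm_sq, hw]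
      simp only [inner_sub_left, inner_sub_right, inner_smul_left, inner_smul_right,
        RCLike.conj_to_real]
      rw [real_inner_self_eq_norm_sq (yhat s), hys, real_inner_self_eq_norm_sq u, hu1,
        real_inner_comm (yhat s) u]
      simp [hgdef]; ring
    have h3 : Real.sqrt (1 - g s ^ 2) = ‖w‖ := by
      rw [← h2, Real.sqrt_sq (norm_nonneg _)]
    rw [h1, h3]
    exact abs_real_inner_le_norm _ _
  have hgle : ∀ s ∈ Icc (0:ℝ) t, |g s| ≤ 1 := by
    intro s hs
    have := abs_real_inner_le_norm (yhat s) u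
    rwa [hunit s hs, hu1, one_mul] at this
  have hg0 : g 0 = 1 := by
    rw [hgdef]; simp only [← hu, real_inner_self_eq_norm_sq, hu1]; norm_num
  have hgt : g t = -1 := by
    rw [hgdef]
    simp only [hanti, ← hu, inner_neg_left, real_inner_self_eq_norm_sq, hu1]
    norm_num
  -- define the endpoints a < b of the "clean" interval
  set A : Set ℝ := Icc (0:ℝ) t ∩ {s | g s = -1} with hA
  have hAcl : IsClosed A := isClosed_Icc.inter (isClosed_eq hgcont continuous_const)
  have hAne : A.Nonempty := ⟨t, ⟨⟨ht.le, le_rfl⟩, hgt⟩⟩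
  have hAbdd : BddBelow A := ⟨0, fun x hx => hx.1.1⟩
  set b := sInf A with hb
  have hbA : b ∈ A := hAcl.csInf_mem hAne hAbdd
  have hb0 : 0 ≤ b := hbA.1.1
  have hbt : b ≤ t := hbA.1.2
  have hgb : g b = -1 := hbA.2
  set B : Set ℝ := Icc (0:ℝ) b ∩ {s | g s = 1} with hB
  have hBcl : IsClosed B := isClosed_Icc.inter (isClosed_eq hgcont continuous_const)
  have hBne : B.Nonempty := ⟨0, ⟨⟨le_rfl, hb0⟩, hg0⟩⟩
  have hBbdd : BddAbove B := ⟨b, fun x hx => hx.1.2⟩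
  set a := sSup B with ha
  have haB : a ∈ B := hBcl.csSup_mem hBne hBbdd
  have ha0 : 0 ≤ a := haB.1.1
  have hga : g a = 1 := haB.2
  have hab : a < b := lt_of_le_of_ne haB.1.2 (fun h => by rw [h, hgb] at hga; norm_num at hga)
  have hsub : Ioo a b ⊆ Ioo (0:ℝ) t := fun s hs =>
    ⟨lt_of_le_of_lt ha0 hs.1, lt_of_lt_of_le hs.2 hbt⟩
  -- on (a,b), g stays strictly between -1 and 1
  have hIoo : ∀ s ∈ Ioo a b, -1 < g s ∧ g s < 1 := by
    intro s hs
    have hs' := hsub hs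
    have habs := hgle s ⟨hs'.1.le, hs'.2.le⟩
    have hne1 : g s ≠ -1 := by
      intro h
      have : b ≤ s := csInf_le hAbdd ⟨⟨hs'.1.le, hs'.2.le⟩, h⟩
      exact absurd hs.2 (not_lt.2 this)
    have hne2 : g s ≠ 1 := by
      intro h
      have : s ≤ a := le_csSup hBbdd ⟨⟨hs'.1.le, hs.2.le⟩, h⟩
      exact absurd hs.1 (not_lt.2 this)
    rw [abs_le] at habs
    exact ⟨lt_of_le_of_ne habs.1 (Ne.symm hne1), lt_of_le_of_ne habs.2 hne2⟩
  set F : ℝ → ℝ := fun s => Real.arccos (g s) with hF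
  have hFcont : Continuous F := Real.continuous_arccos.comp hgcont
  set F' : ℝ → ℝ := fun s => -(1 / Real.sqrt (1 - g s ^ 2)) * ⟪deriv yhat s, u⟫ with hF'def
  have hFd : ∀ s ∈ Ioo a b, HasDerivAt F (F' s) s := by
    intro s hs
    exact (Real.hasDerivAt_arccos (hIoo s hs).1.ne' (hIoo s hs).2.ne).comp s (hg' s)
  have hsqrt_pos : ∀ s ∈ Ioo a b, 0 < Real.sqrt (1 - g s ^ 2) := by
    intro s hs
    apply Real.sqrt_pos.2
    have h := hIoo s hs
    nlinarith [h.1, h.2]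
  have hFbound : ∀ s ∈ Ioo a b, F' s ≤ ‖deriv yhat s‖ := by
    intro s hs
    have hpos := hsqrt_pos s hs
    have hk := hkey s (hsub hs)
    calc F' s ≤ |F' s| := le_abs_self _
      _ = (1 / Real.sqrt (1 - g s ^ 2)) * |⟪deriv yhat s, u⟫| := by
          rw [hF'def, abs_mul, abs_neg, abs_of_nonneg (by positivity)]
      _ ≤ (1 / Real.sqrt (1 - g s ^ 2)) * (‖deriv yhat s‖ * Real.sqrt (1 - g s ^ 2)) := by
          apply mul_le_mul_of_nonneg_left hk (by positivity)
      _ = ‖deriv yhat s‖ := by field_simp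
  have hnormint : IntervalIntegrable (fun s => ‖deriv yhat s‖) MeasureTheory.volume 0 t :=
    (hderiv_cont.norm).intervalIntegrable 0 t
  -- the segment estimate
  have hseg : ∀ a' b', a < a' → a' ≤ b' → b' < b → F b' - F a' ≤ L := by
    intro a' b' ha' hab' hb'
    have hsubIcc : Icc a' b' ⊆ Ioo a b := fun s hs =>
      ⟨lt_of_lt_of_le ha' hs.1, lt_of_le_of_lt hs.2 hb'⟩
    have hF'cont : ContinuousOn F' (Icc a' b') := by
      apply ContinuousOn.mul
      · apply ContinuousOn.neg
        apply ContinuousOn.div continuousOn_const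
        · exact (Real.continuous_sqrt.comp (continuous_const.sub (hgcont.pow 2))).continuousOn
        · intro s hs; exact (hsqrt_pos s (hsubIcc hs)).ne'
      · exact (hderiv_cont.inner continuous_const).continuousOn
    have hF'int : IntervalIntegrable F' MeasureTheory.volume a' b' := by
      apply ContinuousOn.intervalIntegrable
      rwa [uIcc_of_le hab']
    have hFTC : (∫ s in a'..b', F' s) = F b' - F a' := by
      apply intervalIntegral.integral_eq_sub_of_hasDerivAt
      · intro s hs
        rw [uIcc_of_le hab'] at hs
        exact hFd s (hsubIcc hs)
      · exact hF'int
    have hmono : (∫ s in a'..b', F' s) ≤ ∫ s in a'..b', ‖deriv yhat s‖ := by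
      apply intervalIntegral.integral_mono_on hab' hF'int
        ((hderiv_cont.norm).intervalIntegrable a' b')
      intro s hs
      exact hFbound s (hsubIcc hs)
    have hmono2 : (∫ s in a'..b', ‖deriv yhat s‖) ≤ L := by
      rw [hL]
      apply intervalIntegral.integral_mono_interval
        (le_trans ha0 (le_of_lt ha')) hab' (le_trans (le_of_lt hb') hbt)
      · filter_upwards with s using norm_nonneg _
      · exact hnormint
    linarith [hFTC, hmono, hmono2]
  -- pass to the limit b' → b
  have hstep1 : ∀ a' ∈ Ioo a b, F b - F a' ≤ L := by
    intro a' ha'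
    have hne : (nhdsWithin b (Ioo a' b)).NeBot := right_nhdsWithin_Ioo_neBot ha'.2
    have htend : Filter.Tendsto (fun b' => F b' - F a') (nhdsWithin b (Ioo a' b))
        (nhds (F b - F a')) :=
      ((hFcont.tendsto b).sub tendsto_const_nhds).mono_left nhdsWithin_le_nhds
    refine le_of_tendsto htend ?_
    filter_upwards [self_mem_nhdsWithin] with b' hb'
    exact hseg a' b' ha'.1 hb'.1.le hb'.2
  -- pass to the limit a' → a
  have hstep2 : F b - F a ≤ L := by
    have hne : (nhdsWithin a (Ioo a b)).NeBot := left_nhdsWithin_Ioo_neBot hab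
    have htend : Filter.Tendsto (fun a' => F b - F a') (nhdsWithin a (Ioo a b))
        (nhds (F b - F a)) :=
      (tendsto_const_nhds.sub (hFcont.tendsto a)).mono_left nhdsWithin_le_nhds
    refine le_of_tendsto htend ?_
    filter_upwards [self_mem_nhdsWithin] with a' ha'
    exact hstep1 a' ha'
  have hFa : F a = 0 := by rw [hF]; simp [hga, Real.arccos_one]
  have hFb : F b = Real.pi := by rw [hF]; simp [hgb, Real.arccos_neg_one]
  rw [hFa, hFb, sub_zero] at hstep2
  linarith
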